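/- arXiv:1511.07321 — 2 statements merged into one kernel-verified Lean document; each statement's English description precedes it below -/
import Mathlib

section
/- The points p1 = (-2, 3) and p3 = (2, 5) are ℤ-linearly independent in the abelian group E(ℚ): for all integers m, n, if m·p1 + n·p3 = O then m = 0 and n = 0. In particular the map ℤ ⊕ ℤ → E(ℚ), (m,n) ↦ m·p1 + n·p3, is injective. -/
open WeierstrassCurve

noncomputable section

open Polynomial


lemma int_cube_ne (k : ℤ) (s : ℤ) (hs : s = 17 ∨ s = -17) : k ^ 3 ≠ s := by
  intro h
  have hb : 0 ≤ k → k ≤ 3 → False := by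
    intro h0 h3; interval_cases k <;> omega
  have hb' : -3 ≤ k → k ≤ 0 → False := by
    intro h0 h3; interval_cases k <;> omega
  rcases hs with rfl | rfl
  · rcases le_or_gt k 3 with hk | hk
    · rcases le_or_gt 0 k with h0 | h0
      · exact hb h0 hk
      · nlinarith [sq_nonneg k]
    · nlinarith [sq_nonneg k]
  · rcases le_or_gt (-3) k with hk | hk
    · rcases le_or_gt k 0 with h0 | h0
      · exact hb' hk h0
      · nlinarith [sq_nonneg k]
    · nlinarith [sq_nonneg k]

lemma rat_cube_ne (q : ℚ) (s : ℤ) (hs : s = 17 ∨ s = -17) : q ^ 3 ≠ (s : ℚ) := by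
  intro h
  have hnum : q.num ^ 3 = s := by
    have := congrArg Rat.num h
    simpa using this
  exact int_cube_ne q.num s hs hnum


/-- the cubic -/
def fK : ℚ[X] := X ^ 3 - C 17

lemma fK_irr : Irreducible fK :=
  X_pow_sub_C_irreducible_of_prime (by norm_num) (fun b hb => rat_cube_ne b 17 (Or.inl rfl) (by exact_mod_cast hb))

instance : Fact (Irreducible fK) := ⟨fK_irr⟩

abbrev K : Type := AdjoinRoot fK

def θ : K := AdjoinRoot.root fK

abbrev j : ℚ →+* K := algebraMap ℚ K

lemma θ_cube : θ ^ 3 = j 17 := by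
  have h := AdjoinRoot.mk_self (f := fK)
  have : AdjoinRoot.mk fK (X ^ 3 - C 17) = 0 := h
  rw [map_sub, map_pow, AdjoinRoot.mk_X, AdjoinRoot.mk_C, sub_eq_zero] at this
  exact this

lemma fK_monic : fK.Monic := by
  apply Polynomial.monic_X_pow_sub_C <;> norm_num [fK]

lemma fK_degree : fK.degree = 3 := by
  rw [fK]
  compute_degree!

/-- linear independence of 1, θ, θ² over ℚ -/
lemma coeffs_eq_zero (a b c : ℚ) (h : j a + j b * θ + j c * θ ^ 2 = 0) :
    a = 0 ∧ b = 0 ∧ c = 0 := by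
  have hmk : AdjoinRoot.mk fK (C a + C b * X + C c * X ^ 2) = 0 := by
    rw [map_add, map_add, map_mul, map_mul, map_pow, AdjoinRoot.mk_X, AdjoinRoot.mk_C,
      AdjoinRoot.mk_C, AdjoinRoot.mk_C]
    exact h
  have hdvd : fK ∣ (C a + C b * X + C c * X ^ 2) := (AdjoinRoot.mk_eq_zero).mp hmk
  have hzero : (C a + C b * X + C c * X ^ 2 : ℚ[X]) = 0 := by
    by_contra hne
    have hdeg : (C a + C b * X + C c * X ^ 2 : ℚ[X]).degree < fK.degree := by
      rw [fK_degree]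
      calc (C a + C b * X + C c * X ^ 2 : ℚ[X]).degree ≤ 2 := by
            apply le_trans (Polynomial.degree_add_le _ _)
            simp only [sup_le_iff]
            constructor
            · apply le_trans (Polynomial.degree_add_le _ _)
              simp only [sup_le_iff]
              constructor
              · exact le_trans (Polynomial.degree_C_le) (by norm_num)
              · exact le_trans (Polynomial.degree_C_mul_X_le _) (by norm_num)
            · exact Polynomial.degree_C_mul_X_pow_le 2 _
        _ < 3 := by norm_num
    exact hne (Polynomial.eq_zero_of_dvd_of_degree_lt hdvd hdeg)
  have h0 := congrArg (fun p : ℚ[X] => p.coeff 0) hzero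
  have h1 := congrArg (fun p : ℚ[X] => p.coeff 1) hzero
  have h2 := congrArg (fun p : ℚ[X] => p.coeff 2) hzero
  simp [Polynomial.coeff_add, Polynomial.coeff_C, Polynomial.coeff_C_mul, Polynomial.coeff_X,
    Polynomial.coeff_X_pow] at h0 h1 h2
  exact ⟨h0, h1, h2⟩

/-- every element of K is a ℚ-combination of 1, θ, θ² -/
lemma exists_coeffs (ξ : K) : ∃ a b c : ℚ, ξ = j a + j b * θ + j c * θ ^ 2 := by
  obtain ⟨P, rfl⟩ := AdjoinRoot.mk_surjective (g := fK) ξ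
  set r := P %ₘ fK with hr
  have hmkr : AdjoinRoot.mk fK P = AdjoinRoot.mk fK r := by
    rw [AdjoinRoot.mk_eq_mk]
    exact ⟨P /ₘ fK, by rw [hr]; nth_rewrite 1 [← Polynomial.modByMonic_add_div P fK]; ring⟩
  have hdeg : r.natDegree < 3 := by
    have := Polynomial.degree_modByMonic_lt P fK_monic
    rw [fK_degree] at this
    rcases eq_or_ne r 0 with h0 | h0
    · rw [h0]; simp
    · exact_mod_cast (Polynomial.degree_eq_natDegree h0 ▸ this)
  refine ⟨r.coeff 0, r.coeff 1, r.coeff 2, ?_⟩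
  rw [hmkr, ← AdjoinRoot.aeval_eq, Polynomial.aeval_eq_sum_range' hdeg]
  simp only [Finset.sum_range_succ, Algebra.smul_def, θ]
  push_cast
  simp only [eq_ratCast]
  ring

-- helpers
lemma even_int_of_zmod2 {A : ℤ} (h : (A : ZMod 2) = 0) : ∃ A', A = 2 * A' := by
  obtain ⟨k, hk⟩ := (ZMod.intCast_zmod_eq_zero_iff_dvd A 2).mp h
  exact ⟨k, by exact_mod_cast hk⟩

lemma cast2 {x y : ℤ} (h : x = y) : (x : ZMod 2) = (y : ZMod 2) := congrArg _ h

private lemma z1 (a b c d : ZMod 2) (h : a^2 + 34*b*c = -2*d^2) : a = 0 := by revert a b c d; decide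
private lemma z2 (b a c : ZMod 2) (h : b^2 + 2*a*c = 0) : b = 0 := by revert b a c; decide
private lemma z3 (d a b c : ZMod 2) (h : d^2 = -2*a^2 - 34*b*c) : d = 0 := by revert d a b c; decide
private lemma z4 (c d a b : ZMod 2) (h : c^2 = 4*d^2 - 8*a*b - 16*c^2) : c = 0 := by revert c d a b; decide

/-- Descent for ξ² = θ - 2 : no nonzero integer solutions. -/
lemma descent1 : ∀ n : ℕ, ∀ d A B C : ℤ, d.natAbs ≤ n → d ≠ 0 →
    A^2 + 34*B*C = -2*d^2 → 2*A*B + 17*C^2 = d^2 → B^2 + 2*A*C = 0 → False := by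
  intro n
  induction n with
  | zero => intro d A B C hle hd _ _ _; exact hd (by omega)
  | succ n ih =>
    intro d A B C hle hd e1 e2 e3
    -- A even
    have cA : (A : ZMod 2) = 0 := by
      have h := cast2 e1; push_cast at h; exact z1 _ _ _ _ h
    obtain ⟨A₁, rfl⟩ := even_int_of_zmod2 cA
    -- B even
    have cB : (B : ZMod 2) = 0 := by
      have h := cast2 e3; push_cast at h; exact z2 _ _ _ h
    obtain ⟨B₁, rfl⟩ := even_int_of_zmod2 cB
    -- d even
    have hd2 : d^2 = -2*A₁^2 - 34*B₁*C := by linarith [e1]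
    have cd : (d : ZMod 2) = 0 := by
      have h := cast2 hd2; push_cast at h; exact z3 _ _ _ _ h
    obtain ⟨d₁, rfl⟩ := even_int_of_zmod2 cd
    -- C even
    have hC2 : C^2 = 4*d₁^2 - 8*A₁*B₁ - 16*C^2 := by linarith [e2]
    have cC : (C : ZMod 2) = 0 := by
      have h := cast2 hC2; push_cast at h; exact z4 _ _ _ _ h
    obtain ⟨C₁, rfl⟩ := even_int_of_zmod2 cC
    have hd₁ : d₁ ≠ 0 := by rintro rfl; exact hd (by ring)
    have hle' : d₁.natAbs ≤ n := by
      have h1 : (2*d₁).natAbs = 2 * d₁.natAbs := by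
        norm_num [Int.natAbs_mul]
      have h2 : d₁.natAbs ≠ 0 := Int.natAbs_ne_zero.mpr hd₁
      omega
    refine ih d₁ A₁ B₁ C₁ hle' hd₁ ?_ ?_ ?_
    · have : (4:ℤ) * (A₁^2 + 34*B₁*C₁) = 4 * (-2*d₁^2) := by linear_combination e1
      linarith
    · have : (4:ℤ) * (2*A₁*B₁ + 17*C₁^2) = 4 * (d₁^2) := by linear_combination e2
      linarith
    · have : (4:ℤ) * (B₁^2 + 2*A₁*C₁) = 4 * 0 := by linear_combination e3
      linarith

private lemma z5 (a b c d : ZMod 2) (h : a^2 + 34*b*c = 2*d^2) : a = 0 := by revert a b c d; decide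
private lemma z6 (d a b c : ZMod 2) (h : d^2 = 2*a^2 + 34*b*c) : d = 0 := by revert d a b c; decide

/-- Descent for ξ² = θ + 2. -/
lemma descent2 : ∀ n : ℕ, ∀ d A B C : ℤ, d.natAbs ≤ n → d ≠ 0 →
    A^2 + 34*B*C = 2*d^2 → 2*A*B + 17*C^2 = d^2 → B^2 + 2*A*C = 0 → False := by
  intro n
  induction n with
  | zero => intro d A B C hle hd _ _ _; exact hd (by omega)
  | succ n ih =>
    intro d A B C hle hd e1 e2 e3
    have cA : (A : ZMod 2) = 0 := by
      have h := cast2 e1; push_cast at h; exact z5 _ _ _ _ h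
    obtain ⟨A₁, rfl⟩ := even_int_of_zmod2 cA
    have cB : (B : ZMod 2) = 0 := by
      have h := cast2 e3; push_cast at h; exact z2 _ _ _ h
    obtain ⟨B₁, rfl⟩ := even_int_of_zmod2 cB
    have hd2 : d^2 = 2*A₁^2 + 34*B₁*C := by linarith [e1]
    have cd : (d : ZMod 2) = 0 := by
      have h := cast2 hd2; push_cast at h; exact z6 _ _ _ _ h
    obtain ⟨d₁, rfl⟩ := even_int_of_zmod2 cd
    have hC2 : C^2 = 4*d₁^2 - 8*A₁*B₁ - 16*C^2 := by linarith [e2]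
    have cC : (C : ZMod 2) = 0 := by
      have h := cast2 hC2; push_cast at h; exact z4 _ _ _ _ h
    obtain ⟨C₁, rfl⟩ := even_int_of_zmod2 cC
    have hd₁ : d₁ ≠ 0 := by rintro rfl; exact hd (by ring)
    have hle' : d₁.natAbs ≤ n := by
      have h1 : (2*d₁).natAbs = 2 * d₁.natAbs := by norm_num [Int.natAbs_mul]
      have h2 : d₁.natAbs ≠ 0 := Int.natAbs_ne_zero.mpr hd₁
      omega
    refine ih d₁ A₁ B₁ C₁ hle' hd₁ ?_ ?_ ?_
    · have : (4:ℤ) * (A₁^2 + 34*B₁*C₁) = 4 * (2*d₁^2) := by linear_combination e1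
      linarith
    · have : (4:ℤ) * (2*A₁*B₁ + 17*C₁^2) = 4 * (d₁^2) := by linear_combination e2
      linarith
    · have : (4:ℤ) * (B₁^2 + 2*A₁*C₁) = 4 * 0 := by linear_combination e3
      linarith

private lemma z7 (a b c d : ZMod 2) (h : a^2 + 34*b*c = -4*d^2) : a = 0 := by revert a b c d; decide
private lemma z8 (c a b : ZMod 2) (h : 2*a*b + 17*c^2 = 0) : c = 0 := by revert c a b; decide
private lemma z9 (a b c d : ZMod 2) (h1 : a^2 + 17*b*c = -d^2) (h2 : a*b + 17*c^2 = 0)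
    (h3 : b^2 + 8*a*c = d^2) : b = 0 ∧ d = 0 := by revert a b c d; decide

/-- Descent for ξ² = θ² - 4. -/
lemma descent3 : ∀ n : ℕ, ∀ d A B C : ℤ, d.natAbs ≤ n → d ≠ 0 →
    A^2 + 34*B*C = -4*d^2 → 2*A*B + 17*C^2 = 0 → B^2 + 2*A*C = d^2 → False := by
  intro n
  induction n with
  | zero => intro d A B C hle hd _ _ _; exact hd (by omega)
  | succ n ih =>
    intro d A B C hle hd e1 e2 e3
    have cA : (A : ZMod 2) = 0 := by
      have h := cast2 e1; push_cast at h; exact z7 _ _ _ _ h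
    obtain ⟨A₁, rfl⟩ := even_int_of_zmod2 cA
    have cC : (C : ZMod 2) = 0 := by
      have h := cast2 e2; push_cast at h; exact z8 _ _ _ h
    obtain ⟨C₁, rfl⟩ := even_int_of_zmod2 cC
    have f1 : A₁^2 + 17*B*C₁ = -d^2 := by
      have : (4:ℤ) * (A₁^2 + 17*B*C₁) = 4 * (-d^2) := by linear_combination e1
      linarith
    have f2 : A₁*B + 17*C₁^2 = 0 := by
      have : (4:ℤ) * (A₁*B + 17*C₁^2) = 4 * 0 := by linear_combination e2
      linarith
    have f3 : B^2 + 8*A₁*C₁ = d^2 := by linarith [e3]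
    have hBd : (B : ZMod 2) = 0 ∧ (d : ZMod 2) = 0 := by
      have h1 := cast2 f1; push_cast at h1
      have h2 := cast2 f2; push_cast at h2
      have h3 := cast2 f3; push_cast at h3
      exact z9 _ _ _ _ h1 h2 h3
    obtain ⟨B₁, rfl⟩ := even_int_of_zmod2 hBd.1
    have cd := hBd.2
    obtain ⟨d₁, rfl⟩ := even_int_of_zmod2 cd
    have hd₁ : d₁ ≠ 0 := by rintro rfl; exact hd (by ring)
    have hle' : d₁.natAbs ≤ n := by
      have h1 : (2*d₁).natAbs = 2 * d₁.natAbs := by norm_num [Int.natAbs_mul]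
      have h2 : d₁.natAbs ≠ 0 := Int.natAbs_ne_zero.mpr hd₁
      omega
    refine ih d₁ A₁ B₁ C₁ hle' hd₁ ?_ ?_ ?_
    · have : (4:ℤ) * (A₁^2 + 34*B₁*C₁) = 4 * (-4*d₁^2) := by linear_combination e1
      linarith
    · have : (4:ℤ) * (2*A₁*B₁ + 17*C₁^2) = 4 * 0 := by linear_combination e2
      linarith
    · have : (4:ℤ) * (B₁^2 + 2*A₁*C₁) = 4 * d₁^2 := by linear_combination e3
      linarith

lemma θ_cube' : θ ^ 3 = (17 : K) := by rw [θ_cube]; exact map_ofNat j 17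

lemma num_eq (a : ℚ) : (a.num : ℚ) = a * a.den := by
  have hd : (a.den : ℚ) ≠ 0 := by exact_mod_cast a.den_ne_zero
  have h := Rat.num_div_den a
  rw [div_eq_iff hd] at h
  exact h

lemma clearden (a b c : ℚ) : ∃ A B C N : ℤ, N ≠ 0 ∧
    (A:ℚ) = a*N ∧ (B:ℚ) = b*N ∧ (C:ℚ) = c*N := by
  refine ⟨a.num * (b.den * c.den), b.num * (a.den * c.den), c.num * (a.den * b.den),
    (a.den : ℤ) * b.den * c.den, ?_, ?_, ?_, ?_⟩
  · positivity
  · push_cast; rw [num_eq]; ring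
  · push_cast; rw [num_eq]; ring
  · push_cast; rw [num_eq]; ring

lemma not_sq_1 (ξ : K) : ξ ^ 2 ≠ θ - 2 := by
  intro h
  obtain ⟨a, b, c, hξ⟩ := exists_coeffs ξ
  rw [hξ] at h
  have key : j (a^2+34*b*c+2) + j (2*a*b+17*c^2-1) * θ + j (b^2+2*a*c) * θ^2 = 0 := by
    simp only [map_add, map_mul, map_sub, map_pow, map_ofNat, map_one]
    linear_combination h - (2 * j b * j c + (j c)^2 * θ) * θ_cube'
  obtain ⟨e1, e2, e3⟩ := coeffs_eq_zero _ _ _ key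
  obtain ⟨A, B, C, N, hN, hA, hB, hC⟩ := clearden a b c
  refine descent1 N.natAbs N A B C le_rfl hN ?_ ?_ ?_
  · have : (A:ℚ)^2 + 34*B*C = -2*(N:ℚ)^2 := by
      rw [hA, hB, hC]; linear_combination (N:ℚ)^2 * e1
    exact_mod_cast this
  · have : 2*(A:ℚ)*B + 17*C^2 = (N:ℚ)^2 := by
      rw [hA, hB, hC]; linear_combination (N:ℚ)^2 * e2
    exact_mod_cast this
  · have : (B:ℚ)^2 + 2*A*C = 0 := by
      rw [hA, hB, hC]; linear_combination (N:ℚ)^2 * e3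
    exact_mod_cast this

lemma not_sq_2 (ξ : K) : ξ ^ 2 ≠ θ + 2 := by
  intro h
  obtain ⟨a, b, c, hξ⟩ := exists_coeffs ξ
  rw [hξ] at h
  have key : j (a^2+34*b*c-2) + j (2*a*b+17*c^2-1) * θ + j (b^2+2*a*c) * θ^2 = 0 := by
    simp only [map_add, map_mul, map_sub, map_pow, map_ofNat, map_one]
    linear_combination h - (2 * j b * j c + (j c)^2 * θ) * θ_cube'
  obtain ⟨e1, e2, e3⟩ := coeffs_eq_zero _ _ _ key
  obtain ⟨A, B, C, N, hN, hA, hB, hC⟩ := clearden a b c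
  refine descent2 N.natAbs N A B C le_rfl hN ?_ ?_ ?_
  · have : (A:ℚ)^2 + 34*B*C = 2*(N:ℚ)^2 := by
      rw [hA, hB, hC]; linear_combination (N:ℚ)^2 * e1
    exact_mod_cast this
  · have : 2*(A:ℚ)*B + 17*C^2 = (N:ℚ)^2 := by
      rw [hA, hB, hC]; linear_combination (N:ℚ)^2 * e2
    exact_mod_cast this
  · have : (B:ℚ)^2 + 2*A*C = 0 := by
      rw [hA, hB, hC]; linear_combination (N:ℚ)^2 * e3
    exact_mod_cast this

lemma not_sq_3 (ξ : K) : ξ ^ 2 ≠ θ^2 - 4 := by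
  intro h
  obtain ⟨a, b, c, hξ⟩ := exists_coeffs ξ
  rw [hξ] at h
  have key : j (a^2+34*b*c+4) + j (2*a*b+17*c^2) * θ + j (b^2+2*a*c-1) * θ^2 = 0 := by
    simp only [map_add, map_mul, map_sub, map_pow, map_ofNat, map_one]
    linear_combination h - (2 * j b * j c + (j c)^2 * θ) * θ_cube'
  obtain ⟨e1, e2, e3⟩ := coeffs_eq_zero _ _ _ key
  obtain ⟨A, B, C, N, hN, hA, hB, hC⟩ := clearden a b c
  refine descent3 N.natAbs N A B C le_rfl hN ?_ ?_ ?_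
  · have : (A:ℚ)^2 + 34*B*C = -4*(N:ℚ)^2 := by
      rw [hA, hB, hC]; linear_combination (N:ℚ)^2 * e1
    exact_mod_cast this
  · have : 2*(A:ℚ)*B + 17*C^2 = 0 := by
      rw [hA, hB, hC]; linear_combination (N:ℚ)^2 * e2
    exact_mod_cast this
  · have : (B:ℚ)^2 + 2*A*C = (N:ℚ)^2 := by
      rw [hA, hB, hC]; linear_combination (N:ℚ)^2 * e3
    exact_mod_cast this

-- ### the square-class group
def sqSub : Subgroup Kˣ := (powMonoidHom 2 : Kˣ →* Kˣ).range

abbrev Qg := Kˣ ⧸ sqSub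

lemma xθ_ne (x : ℚ) : j x + θ ≠ 0 := by
  intro h
  have h' : j x + j 1 * θ + j 0 * θ ^ 2 = 0 := by
    simpa using h
  have := (coeffs_eq_zero _ _ _ h').2.1
  norm_num at this

def sqcl (u : K) (hu : u ≠ 0) : Qg := QuotientGroup.mk (Units.mk0 u hu)

lemma sqcl_mul (a b : K) (ha : a ≠ 0) (hb : b ≠ 0) :
    sqcl a ha * sqcl b hb = sqcl (a*b) (mul_ne_zero ha hb) := by
  rw [sqcl, sqcl, sqcl, ← QuotientGroup.mk_mul, ← Units.mk0_mul]

lemma sqcl_congr {a b : K} (h : a = b) (ha : a ≠ 0) : sqcl a ha = sqcl b (h ▸ ha) := by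
  subst h; rfl

lemma sqcl_sq_eq_one (w : K) (hw : w ≠ 0) : sqcl (w^2) (pow_ne_zero 2 hw) = 1 := by
  rw [sqcl, QuotientGroup.eq_one_iff]
  exact ⟨Units.mk0 w hw, by ext; simp [powMonoidHom]⟩

lemma Qg_mul_self (q : Qg) : q * q = 1 := by
  induction q using QuotientGroup.induction_on with
  | H u =>
    rw [← QuotientGroup.mk_mul, QuotientGroup.eq_one_iff]
    exact ⟨u, by rw [powMonoidHom_apply, pow_two]⟩

lemma sqcl_eq_of_mul_sq (a b c w : K) (ha : a ≠ 0) (hb : b ≠ 0) (hc : c ≠ 0)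
    (h : a * b * c = w ^ 2) : sqcl c hc = sqcl a ha * sqcl b hb := by
  have hw : w ≠ 0 := by
    intro hw0
    apply mul_ne_zero (mul_ne_zero ha hb) hc
    rw [h, hw0]; ring
  have h1 : sqcl c hc * (sqcl a ha * sqcl b hb) = 1 := by
    rw [sqcl_mul, sqcl_mul]
    have : c * (a * b) = w ^ 2 := by linear_combination h
    rw [sqcl_congr this]
    exact sqcl_sq_eq_one w hw
  have h2 := Qg_mul_self (sqcl a ha * sqcl b hb)
  have h3 : sqcl c hc = (sqcl a ha * sqcl b hb)⁻¹ := eq_inv_of_mul_eq_one_left h1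
  have h4 : (sqcl a ha * sqcl b hb)⁻¹ = sqcl a ha * sqcl b hb := inv_eq_of_mul_eq_one_right h2
  rw [h3, h4]

lemma sqcl_ne_one_of_not_sq (u : K) (hu : u ≠ 0) (h : ∀ ξ : K, ξ^2 ≠ u) : sqcl u hu ≠ 1 := by
  intro h1
  rw [sqcl, QuotientGroup.eq_one_iff] at h1
  obtain ⟨v, hv⟩ := h1
  have : ((v:K))^2 = u := by
    have := congrArg Units.val hv
    simpa [powMonoidHom] using this
  exact h _ this


/-- The elliptic curve `E : y² = x³ + 17` over `ℚ`. -/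
def E : WeierstrassCurve ℚ := ⟨0, 0, 0, 0, 17⟩

lemma hp1 : E.toAffine.Nonsingular (-2) 3 := by
  rw [Affine.nonsingular_iff, Affine.equation_iff]; norm_num [E]

/-- The point `p1 = ((-2), 3)` on `E`. -/
def p1 : E.toAffine.Point := .some _ _ hp1

lemma hp3 : E.toAffine.Nonsingular 2 5 := by
  rw [Affine.nonsingular_iff, Affine.equation_iff]; norm_num [E]

/-- The point `p3 = (2, 5)` on `E`. -/
def p3 : E.toAffine.Point := .some _ _ hp3

-- E-specific facts
lemma EnegY (x y : ℚ) : E.toAffine.negY x y = -y := by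
  simp [WeierstrassCurve.Affine.negY, E]

lemma Eeq {x y : ℚ} (h : E.toAffine.Equation x y) : y^2 = x^3 + 17 := by
  rw [Affine.equation_iff] at h
  norm_num [E] at h
  linarith

lemma EaddX (x₁ x₂ L : ℚ) : E.toAffine.addX x₁ x₂ L = L^2 - x₁ - x₂ := by
  simp [WeierstrassCurve.Affine.addX, E]

lemma EslopeX {x₁ x₂ y₁ y₂ : ℚ} (hx : x₁ ≠ x₂) :
    E.toAffine.slope x₁ x₂ y₁ y₂ * (x₁ - x₂) = y₁ - y₂ := by
  rw [Affine.slope_of_X_ne hx, div_mul_cancel₀ _ (sub_ne_zero.mpr hx)]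

lemma EslopeY {x₁ x₂ y₁ y₂ : ℚ} (hx : x₁ = x₂) (hy : y₁ ≠ E.toAffine.negY x₂ y₂)
    (hy1 : y₁ ≠ 0) :
    E.toAffine.slope x₁ x₂ y₁ y₂ * (2 * y₁) = 3 * x₁^2 := by
  rw [Affine.slope_of_Y_ne hx hy, EnegY]
  have h2y : y₁ - -y₁ ≠ 0 := by intro h; exact hy1 (by linarith [sub_eq_zero.mp h])
  rw [div_mul_eq_mul_div, div_eq_iff h2y]
  show (3 * x₁ ^ 2 + 2 * (0:ℚ) * x₁ + 0 - 0 * y₁) * (2 * y₁) = 3 * x₁ ^ 2 * (y₁ - -y₁)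
  ring

-- the two key identities in K
lemma chord_id (x1 x2 y1 y2 L t : K) (ht : t^3 = 17) (e1 : y1^2 = x1^3+17) (e2 : y2^2 = x2^3+17)
    (hx : x1 ≠ x2) (hL : L*(x1-x2) = y1-y2) :
    (x1+t)*((x2+t)*((L^2-x1-x2)+t)) = (y1 - L*x1 - L*t)^2 := by
  apply mul_left_cancel₀ (sub_ne_zero.mpr hx)
  linear_combination (x1-x2)*ht + (t+x2)*e1 - (t+x1)*e2 + (t+x1)*(L*x2 + y1 - L*x1 + y2)*hL

lemma tangent_id (x1 y1 L t : K) (ht : t^3 = 17) (e1 : y1^2 = x1^3+17)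
    (hL : L*(2*y1) = 3*x1^2) :
    (x1+t)*((x1+t)*((L^2-x1-x1)+t)) = (y1 - L*x1 - L*t)^2 := by
  linear_combination ht - e1 + (x1+t)*hL

lemma jinj : Function.Injective (j : ℚ →+* K) := (algebraMap ℚ K).injective

def fP : E.toAffine.Point → Qg
  | .zero => 1
  | @WeierstrassCurve.Affine.Point.some _ _ _ x _ _ => sqcl (j x + θ) (xθ_ne x)

lemma fP_zero : fP 0 = 1 := rfl

lemma fP_some {x y : ℚ} (h : E.toAffine.Nonsingular x y) :
    fP (.some _ _ h) = sqcl (j x + θ) (xθ_ne x) := rfl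

lemma f_add (P Q : E.toAffine.Point) : fP (P + Q) = fP P * fP Q := by
  cases P with
  | zero => rw [← Affine.Point.zero_def, zero_add, fP_zero]; exact (one_mul (fP Q)).symm
  | @some x₁ y₁ h₁ =>
    cases Q with
    | zero => rw [← Affine.Point.zero_def, add_zero, fP_zero]; exact (mul_one (fP (Affine.Point.some _ _ h₁))).symm
    | @some x₂ y₂ h₂ =>
      set L := E.toAffine.slope x₁ x₂ y₁ y₂ with hLdef
      have e1 : (j y₁)^2 = (j x₁)^3 + 17 := by
        have := congrArg j (Eeq h₁.1)
        simpa [map_pow, map_add] using this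
      have e2 : (j y₂)^2 = (j x₂)^3 + 17 := by
        have := congrArg j (Eeq h₂.1)
        simpa [map_pow, map_add] using this
      by_cases hy : x₁ = x₂ ∧ y₁ = E.toAffine.negY x₂ y₂
      · rw [Affine.Point.add_of_Y_eq hy.1 hy.2, fP_zero, fP_some, fP_some]
        obtain ⟨hx, -⟩ := hy
        subst hx
        rw [sqcl_mul, sqcl_congr (show (j x₁+θ)*(j x₁+θ) = (j x₁+θ)^2 by ring)]
        exact (sqcl_sq_eq_one _ (xθ_ne x₁)).symm
      · have hxy : x₁ = x₂ → y₁ ≠ E.toAffine.negY x₂ y₂ := fun h1 h2 => hy ⟨h1, h2⟩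
        rw [Affine.Point.add_some hy, fP_some, fP_some, fP_some]
        have hcoord : j (E.toAffine.addX x₁ x₂ L) + θ = ((j L)^2 - j x₁ - j x₂) + θ := by
          rw [EaddX]; simp [map_sub, map_pow]
        rw [sqcl_congr hcoord]
        symm
        apply (sqcl_eq_of_mul_sq (j x₁ + θ) (j x₂ + θ) _
          (j y₁ - j L * j x₁ - j L * θ) _ _ _ ?_).symm
        by_cases hx : x₁ = x₂
        · subst hx
          have hyy : y₁ = y₂ := Affine.Y_eq_of_Y_ne h₁.1 h₂.1 rfl (hxy rfl)
          have hy1 : y₁ ≠ 0 := by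
            intro h0
            apply hxy rfl
            rw [EnegY, h0, ← hyy, h0, neg_zero]
          have hL : j L * (2 * j y₁) = 3 * (j x₁)^2 := by
            have := congrArg j (EslopeY rfl (hxy rfl) hy1)
            simpa [map_mul, map_pow, map_ofNat] using this
          have := tangent_id (j x₁) (j y₁) (j L) θ θ_cube' e1 hL
          linear_combination this
        · have hL : j L * (j x₁ - j x₂) = j y₁ - j y₂ := by
            have := congrArg j (EslopeX (y₁ := y₁) (y₂ := y₂) hx)
            simpa [map_mul, map_sub] using this
          have hjx : j x₁ ≠ j x₂ := fun h => hx (jinj h)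
          have := chord_id (j x₁) (j x₂) (j y₁) (j y₂) (j L) θ θ_cube' e1 e2 hjx hL
          linear_combination this

def fHom : E.toAffine.Point →+ Additive Qg :=
  AddMonoidHom.mk' (fun P => Additive.ofMul (fP P)) (fun P Q => by
    simp only [f_add]; rfl)

lemma Qg_two_torsion (g : Additive Qg) : g + g = 0 := by
  have := Qg_mul_self g.toMul
  exact this

lemma abstract_parity {A : Type u_1} [AddCommGroup A] (hA : ∀ g : A, g + g = 0)
    (g : A) (m : ℤ) : m • g = (m % 2) • g := by
  have h1 : m • g = (2*(m/2)) • g + (m % 2) • g := by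
    rw [← add_zsmul]; congr 1; omega
  rw [h1, mul_zsmul, two_zsmul, hA, zero_add]

lemma zsmul_parity (g : Additive Qg) (m : ℤ) : m • g = (m % 2) • g :=
  abstract_parity Qg_two_torsion g m

-- 2-torsion triviality in E(ℚ)
lemma two_torsion_free (P : E.toAffine.Point) (h : P + P = 0) : P = 0 := by
  cases P with
  | zero => rfl
  | @some x y hP =>
    exfalso
    by_cases hy : y = E.toAffine.negY x y
    · have hy0 : y = 0 := by rw [EnegY] at hy; linarith
      have he := Eeq hP.1
      rw [hy0] at he
      have : (-x)^3 = ((17:ℤ):ℚ) := by push_cast; linarith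
      exact rat_cube_ne (-x) 17 (Or.inl rfl) this
    · rw [Affine.Point.add_self_of_Y_ne hy] at h
      exact Affine.Point.some_ne_zero _ h

lemma fHom_p1 : fHom p1 = Additive.ofMul (sqcl (θ - 2) (by
    have := xθ_ne (-2); rwa [show j (-2) + θ = θ - 2 by rw [map_neg, map_ofNat]; ring] at this)) := by
  show Additive.ofMul (fP p1) = _
  rw [p1, fP_some]
  congr 1
  exact sqcl_congr (by rw [map_neg, map_ofNat]; ring) _

lemma fHom_p3 : fHom p3 = Additive.ofMul (sqcl (θ + 2) (by
    have := xθ_ne 2; rwa [show j 2 + θ = θ + 2 by rw [map_ofNat]; ring] at this)) := by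
  show Additive.ofMul (fP p3) = _
  rw [p3, fP_some]
  congr 1
  exact sqcl_congr (by rw [map_ofNat]; ring) _

lemma fp1_ne : fHom p1 ≠ 0 := by
  rw [fHom_p1]
  intro h
  have h' := congrArg Additive.toMul h
  exact sqcl_ne_one_of_not_sq _ _ not_sq_1 h'

lemma fp3_ne : fHom p3 ≠ 0 := by
  rw [fHom_p3]
  intro h
  have h' := congrArg Additive.toMul h
  exact sqcl_ne_one_of_not_sq _ _ not_sq_2 h'

lemma fp13_ne : fHom p1 + fHom p3 ≠ 0 := by
  rw [fHom_p1, fHom_p3]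
  intro h
  have h' := congrArg Additive.toMul h
  have h'' : sqcl (θ - 2) _ * sqcl (θ + 2) _ = 1 := h'
  rw [sqcl_mul] at h''
  rw [sqcl_congr (show (θ-2)*(θ+2) = θ^2 - 4 by ring)] at h''
  exact sqcl_ne_one_of_not_sq _ _ not_sq_3 h''

lemma main_descent : ∀ N : ℕ, ∀ m n : ℤ, m.natAbs + n.natAbs ≤ N →
    m • p1 + n • p3 = 0 → m = 0 ∧ n = 0 := by
  intro N
  induction N with
  | zero => intro m n hN _; omega
  | succ N ih =>
    intro m n hN h
    have himg : (m % 2) • fHom p1 + (n % 2) • fHom p3 = 0 := by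
      have h2 := congrArg fHom h
      rw [map_add, map_zsmul, map_zsmul, map_zero] at h2
      rw [← zsmul_parity, ← zsmul_parity]
      exact h2
    have hm2 := Int.emod_two_eq m
    have hn2 := Int.emod_two_eq n
    rcases hm2 with hm | hm <;> rcases hn2 with hn | hn
    · -- both even
      have hm' : m = 2 * (m / 2) := by omega
      have hn' : n = 2 * (n / 2) := by omega
      set m' := m / 2 with hm'd
      set n' := n / 2 with hn'd
      have hsum : (m' • p1 + n' • p3) + (m' • p1 + n' • p3) = 0 := by
        have e : (m' • p1 + n' • p3) + (m' • p1 + n' • p3)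
            = (m' + m') • p1 + (n' + n') • p3 := by
          rw [add_zsmul, add_zsmul]; abel
        rw [e, show m' + m' = m by omega, show n' + n' = n by omega, h]
      have hS := two_torsion_free _ hsum
      have hb : m'.natAbs + n'.natAbs ≤ N := by omega
      obtain ⟨h1, h2⟩ := ih m' n' hb hS
      omega
    · -- m even, n odd : n % 2 = 1
      exfalso
      rw [hm, hn] at himg
      rw [zero_zsmul, one_zsmul, zero_add] at himg
      exact fp3_ne himg
    · exfalso
      rw [hm, hn] at himg
      rw [zero_zsmul, one_zsmul, add_zero] at himg
      exact fp1_ne himg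
    · exfalso
      rw [hm, hn] at himg
      rw [one_zsmul, one_zsmul] at himg
      exact fp13_ne himg

/-- `p1 = (-2, 3)` and `p3 = (2, 5)` are `ℤ`-linearly independent in `E(ℚ)`; in particular
`(m, n) ↦ m • p1 + n • p3` is an injective map `ℤ ⊕ ℤ → E(ℚ)`. -/
theorem p1_p3_independent :
    (∀ m n : ℤ, m • p1 + n • p3 = 0 → m = 0 ∧ n = 0) ∧
    Function.Injective (fun mn : ℤ × ℤ => mn.1 • p1 + mn.2 • p3) := by
  have key : ∀ m n : ℤ, m • p1 + n • p3 = 0 → m = 0 ∧ n = 0 := fun m n h =>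
    main_descent (m.natAbs + n.natAbs) m n le_rfl h
  refine ⟨key, ?_⟩
  rintro ⟨m, n⟩ ⟨m', n'⟩ h
  simp only at h
  have hz : (m - m') • p1 + (n - n') • p3 = 0 := by
    have h' : (m • p1 + n • p3) - (m' • p1 + n' • p3) = 0 := by rw [h]; abel
    rw [sub_zsmul, sub_zsmul, ← h']
    abel
  obtain ⟨h1, h2⟩ := key _ _ hz
  have e1 : m = m' := by omega
  have e2 : n = n' := by omega
  rw [Prod.mk.injEq]
  exact ⟨e1, e2⟩
end
end

section
/- None of the three points p1 = (-2, 3), p3 = (2, 5), p4 = (4, 9) is a double of an integral point: there is no point q ∈ E(ℚ) whose affine coordinates are both integers and which satisfies 2q = p1, and likewise there is no such q with 2q = p3 or 2q = p4. -/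
open WeierstrassCurve

noncomputable section

lemma hp4 : E.toAffine.Nonsingular 4 9 := by
  rw [Affine.nonsingular_iff, Affine.equation_iff]; norm_num [E]

/-- The point `p4 = (4, 9)` on `E`. -/
def p4 : E.toAffine.Point := .some _ _ hp4

lemma key (a b : ℤ) (h : E.toAffine.Nonsingular (a : ℚ) (b : ℚ)) {x0 y0 : ℚ}
    (h0 : E.toAffine.Nonsingular x0 y0)
    (hq : (2 : ℤ) • (Affine.Point.some _ _ h) = Affine.Point.some _ _ h0) :
    b ^ 2 = a ^ 3 + 17 ∧
      9 * (a : ℚ) ^ 4 = (x0 + 2 * (a : ℚ)) * (4 * ((a : ℚ) ^ 3 + 17)) := by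
  have heqQ : (b : ℚ) ^ 2 = (a : ℚ) ^ 3 + 17 := by
    have := h.1
    rw [Affine.equation_iff] at this
    simpa [E] using this
  refine ⟨by exact_mod_cast heqQ, ?_⟩
  rw [two_zsmul] at hq
  by_cases hy : (b : ℚ) = E.toAffine.negY (a : ℚ) (b : ℚ)
  · rw [Affine.Point.add_self_of_Y_eq hy] at hq
    exact absurd hq.symm (Affine.Point.some_ne_zero h0)
  · rw [Affine.Point.add_self_of_Y_ne hy] at hq
    have hx := (Affine.Point.some.inj hq).1
    have hb0 : (b : ℚ) ≠ 0 := by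
      intro h'
      exact hy (by simp [E, Affine.negY, h'])
    rw [Affine.slope_of_Y_ne rfl hy] at hx
    simp only [E, Affine.addX, Affine.negY] at hx
    have h2b : ((b : ℚ) + b) ≠ 0 := by intro h'; apply hb0; linarith
    norm_num at hx
    rw [sub_sub, sub_eq_iff_eq_add, div_pow, div_eq_iff (pow_ne_zero 2 h2b)] at hx
    linear_combination hx + 4 * (x0 + 2 * (a:ℚ)) * heqQ

/-- None of `p1 = (-2, 3)`, `p3 = (2, 5)`, `p4 = (4, 9)` is the double of a point of `E(ℚ)`
whose affine coordinates are both integers. -/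
theorem not_double_of_integral_point :
    (¬ ∃ (a b : ℤ) (h : E.toAffine.Nonsingular (a : ℚ) (b : ℚ)),
      (2 : ℤ) • (Affine.Point.some _ _ h) = p1) ∧
    (¬ ∃ (a b : ℤ) (h : E.toAffine.Nonsingular (a : ℚ) (b : ℚ)),
      (2 : ℤ) • (Affine.Point.some _ _ h) = p3) ∧
    (¬ ∃ (a b : ℤ) (h : E.toAffine.Nonsingular (a : ℚ) (b : ℚ)),
      (2 : ℤ) • (Affine.Point.some _ _ h) = p4) := by
  refine ⟨?_, ?_, ?_⟩ <;> rintro ⟨a, b, h, hq⟩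
  · obtain ⟨hb, ha⟩ := key a b h hp1 hq
    have haZ : 9 * a ^ 4 = (-2 + 2 * a) * (4 * (a ^ 3 + 17)) := by exact_mod_cast ha
    have h0 : (0:ℤ) ≤ a ^ 3 + 17 := hb ▸ sq_nonneg b
    have h1 : -2 ≤ a := by nlinarith [sq_nonneg a, sq_nonneg (a + 3)]
    have h2 : a ≤ 6 := by nlinarith [sq_nonneg a, sq_nonneg (a - 6), sq_nonneg (a + 6)]
    interval_cases a <;> norm_num at haZ
  · obtain ⟨hb, ha⟩ := key a b h hp3 hq
    have haZ : 9 * a ^ 4 = (2 + 2 * a) * (4 * (a ^ 3 + 17)) := by exact_mod_cast ha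
    have h0 : (0:ℤ) ≤ a ^ 3 + 17 := hb ▸ sq_nonneg b
    have h1 : -2 ≤ a := by nlinarith [sq_nonneg a, sq_nonneg (a + 3)]
    have h2 : a ≤ 9 := by nlinarith [sq_nonneg a, sq_nonneg (a - 9), sq_nonneg (a + 9), sq_nonneg (a * (a - 9))]
    interval_cases a <;> norm_num at haZ
  · obtain ⟨hb, ha⟩ := key a b h hp4 hq
    have haZ : 9 * a ^ 4 = (4 + 2 * a) * (4 * (a ^ 3 + 17)) := by exact_mod_cast ha
    have h0 : (0:ℤ) ≤ a ^ 3 + 17 := hb ▸ sq_nonneg b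
    have h1 : -2 ≤ a := by nlinarith [sq_nonneg a, sq_nonneg (a + 3)]
    have h2 : a ≤ 16 := by nlinarith [sq_nonneg a, sq_nonneg (a - 16), sq_nonneg (a + 16), sq_nonneg (a * (a - 16))]
    interval_cases a <;> norm_num at haZ
end
end
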